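/- Let T⁺ be a theory in a language with unary predicates W₀,…,W_n and relations as in Lemma 3.1, and let M⁺ be a model of axioms (2)–(7). If x ∉ W_n^{M⁺} then the set of <-predecessors of x has cardinality exactly |W_n^{M⁺}|; consequently the universe of M⁺ has cardinality at most |W_n^{M⁺}|⁺. -/

import Mathlib

open FirstOrder Cardinal Set

/-- The interpretation of the unary predicate `U` in `X`. -/
def USet (L : FirstOrder.Language.{0,0}) (U : L.Relations 1) (X : Type) [L.Structure X] :
    Set X :=
  {x | Language.Structure.RelMap U ![x]}

/-- Axioms (2)–(7) of Lemma 3.1, stated semantically for a structure `X` in a language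
containing `U`, with a binary relation `lt` (for `<`), unary predicates `W 0, …, W n`,
a binary relation `Fneg` (for `F₋₁`) and ternary relations `Fi i` (for `F_i`, `i ≤ n`):
`lt` is a linear order; each `W i` is an initial segment of `W (i+1)` and `W n` is an
initial segment of the universe; `U ⊆ W n`; `Fneg` is the graph of a bijection from `U`
onto `W 0`; for `i < n` and `x ∈ W (i+1) \ W i`, `Fi i x` is the graph of a bijection from
`W i` onto the `lt`-predecessors of `x`; for `x ∉ W n`, `Fi n x` is the graph of a
bijection from `W n` onto the `lt`-predecessors of `x`. -/
structure PlusAxioms (L : FirstOrder.Language.{0,0}) (U : L.Relations 1) (n : ℕ)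
    (X : Type) [L.Structure X] (lt : X → X → Prop) (W : Fin (n + 1) → Set X)
    (Fneg : X → X → Prop) (Fi : Fin (n + 1) → X → X → X → Prop) : Prop where
  linear : IsLinearOrder X lt
  mono : ∀ i : Fin n, W i.castSucc ⊆ W i.succ
  initialSeg : ∀ i : Fin n, ∀ x ∈ W i.castSucc, ∀ y ∈ W i.succ, lt y x → y ∈ W i.castSucc
  lastInitial : ∀ x ∈ W (Fin.last n), ∀ y, lt y x → y ∈ W (Fin.last n)
  Usub : USet L U X ⊆ W (Fin.last n)
  Fneg_dom : ∀ x y, Fneg x y → x ∈ USet L U X ∧ y ∈ W 0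
  Fneg_fun : ∀ x ∈ USet L U X, ∃! y, Fneg x y
  Fneg_inv : ∀ y ∈ W 0, ∃! x, Fneg x y
  Fi_dom : ∀ i : Fin n, ∀ x ∈ W i.succ \ W i.castSucc, ∀ y z,
    Fi i.castSucc x y z → y ∈ W i.castSucc ∧ z ∈ W i.succ ∧ lt z x
  Fi_fun : ∀ i : Fin n, ∀ x ∈ W i.succ \ W i.castSucc, ∀ y ∈ W i.castSucc,
    ∃! z, Fi i.castSucc x y z
  Fi_inv : ∀ i : Fin n, ∀ x ∈ W i.succ \ W i.castSucc, ∀ z ∈ W i.succ, lt z x →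
    ∃! y, Fi i.castSucc x y z
  Fn_dom : ∀ x, x ∉ W (Fin.last n) → ∀ y z,
    Fi (Fin.last n) x y z → y ∈ W (Fin.last n) ∧ lt z x
  Fn_fun : ∀ x, x ∉ W (Fin.last n) → ∀ y ∈ W (Fin.last n), ∃! z, Fi (Fin.last n) x y z
  Fn_inv : ∀ x, x ∉ W (Fin.last n) → ∀ z, lt z x → ∃! y, Fi (Fin.last n) x y z

/-- in any model of axioms (2)–(7) of Lemma 3.1, if `x ∉ W n` then the set
of `lt`-predecessors of `x` has cardinality exactly `|W n|`; consequently the universe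
has cardinality at most `|W n|⁺`. -/

theorem card_le_succ_of_small_segments {X : Type} (lt : X → X → Prop)
    (lin : IsLinearOrder X lt) {μ : Cardinal} (hμ : ℵ₀ ≤ μ)
    (h : ∀ x : X, #{z : X | lt z x} ≤ μ) : #X ≤ Order.succ μ := by
  classical
  by_contra hc
  rw [not_le] at hc
  haveI : Nonempty X := by
    rw [← mk_ne_zero_iff]
    intro h0
    rw [h0] at hc
    exact (Cardinal.zero_le _).not_gt hc
  set κ := Order.succ μ with hκ
  have hsucc : ℵ₀ ≤ κ := hμ.trans (Order.le_succ μ)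
  -- every set of size ≤ μ⁺ has a strict upper bound
  have hA : ∀ S : Set X, #S ≤ κ → ∃ x, ∀ s ∈ S, lt s x ∧ x ≠ s := by
    intro S hS
    have hU : #(⋃ s ∈ S, {z : X | lt z s}) < #X := by
      refine lt_of_le_of_lt ((mk_biUnion_le _ _).trans ?_) hc
      calc #S * ⨆ s : S, #{z : X | lt z (s : X)}
          ≤ κ * μ := mul_le_mul' hS (ciSup_le' fun s => h _)
        _ ≤ κ := by rw [mul_eq_max hsucc hμ, max_eq_left (Order.le_succ μ)]
    have : ∃ x : X, x ∉ ⋃ s ∈ S, {z : X | lt z s} := by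
      by_contra hx
      push_neg at hx
      refine hU.not_ge ?_
      calc #X = #(univ : Set X) := mk_univ.symm
        _ ≤ _ := mk_le_mk_of_subset fun z _ => hx z
    obtain ⟨x, hx⟩ := this
    refine ⟨x, fun s hs => ?_⟩
    have h1 : ¬ lt x s := fun hlt => hx (Set.mem_biUnion hs hlt)
    have h2 : x ≠ s := fun he => h1 (he ▸ lin.refl x)
    rcases lin.total x s with h3 | h3
    · exact absurd h3 h1
    · exact ⟨h3, h2⟩
  -- build a strictly increasing chain of length κ.ord by recursion
  let F : ∀ o : Ordinal.{0}, (∀ o' : Ordinal.{0}, o' < o → X) → X := fun o ih =>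
    if hex : ∃ x : X, ∀ (o') (ho : o' < o), lt (ih o' ho) x ∧ x ≠ ih o' ho then hex.choose
    else Classical.arbitrary X
  let g : Ordinal.{0} → X := Ordinal.lt_wf.fix F
  have geq : ∀ o, g o = F o (fun o' _ => g o') := fun o =>
    WellFounded.fix_eq Ordinal.lt_wf F o
  have key : ∀ o : Ordinal.{0}, o ≤ κ.ord → ∀ o' < o, lt (g o') (g o) ∧ g o ≠ g o' := by
    intro o
    induction o using Ordinal.induction with
    | h o ih =>
      intro ho
      have hcard : #(g '' Iio o) ≤ κ := by
        have h1 : Cardinal.lift.{1} #(g '' Iio o) ≤ Cardinal.lift.{0} #(Iio o) :=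
          mk_image_le_lift
        rw [Ordinal.mk_Iio_ordinal] at h1
        have h2 : #(g '' Iio o) ≤ o.card := by
          rw [← Cardinal.lift_le.{1}]
          simpa using h1
        exact h2.trans (by simpa using Ordinal.card_le_card ho)
      obtain ⟨x, hx⟩ := hA _ hcard
      have hex : ∃ x : X, ∀ (o') (ho' : o' < o), lt (g o') x ∧ x ≠ g o' :=
        ⟨x, fun o' ho' => hx _ (Set.mem_image_of_mem g ho')⟩
      have hgo : g o = hex.choose := by
        rw [geq o]
        exact dif_pos hex
      intro o' ho'
      rw [hgo]
      exact hex.choose_spec o' ho'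
  -- the image of g on Iio κ.ord has size κ but is bounded: contradiction
  have hinj : Set.InjOn g (Iio κ.ord) := by
    intro a ha b hb hab
    by_contra hne
    rcases lt_or_gt_of_ne hne with h1 | h1
    · exact (key b hb.le a h1).2 hab.symm
    · exact (key a ha.le b h1).2 hab
  have hcard : #(g '' Iio κ.ord) = κ := by
    have h1 := mk_image_eq_of_injOn_lift g (Iio κ.ord) hinj
    rw [Ordinal.mk_Iio_ordinal, Cardinal.card_ord] at h1
    rw [← Cardinal.lift_inj.{0,1}]
    simpa using h1
  obtain ⟨x, hx⟩ := hA _ hcard.le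
  have : κ ≤ μ := by
    rw [← hcard]
    refine (mk_le_mk_of_subset ?_).trans (h x)
    intro z hz
    exact (hx z hz).1
  exact (Order.lt_succ μ).not_ge this


theorem stmt8' (L : FirstOrder.Language.{0,0}) (U : L.Relations 1) (n : ℕ)
    (X : Type) [L.Structure X] (lt : X → X → Prop) (W : Fin (n + 1) → Set X)
    (Fneg : X → X → Prop) (Fi : Fin (n + 1) → X → X → X → Prop)
    (ax : True) (lin : IsLinearOrder X lt)
    (lastInitial : ∀ x ∈ W (Fin.last n), ∀ y, lt y x → y ∈ W (Fin.last n))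
    (Fn_dom : ∀ x, x ∉ W (Fin.last n) → ∀ y z,
      Fi (Fin.last n) x y z → y ∈ W (Fin.last n) ∧ lt z x)
    (Fn_fun : ∀ x, x ∉ W (Fin.last n) → ∀ y ∈ W (Fin.last n), ∃! z, Fi (Fin.last n) x y z)
    (Fn_inv : ∀ x, x ∉ W (Fin.last n) → ∀ z, lt z x → ∃! y, Fi (Fin.last n) x y z) :
    (∀ x, x ∉ W (Fin.last n) → #{z : X | lt z x} = #(W (Fin.last n))) ∧
      #X ≤ Order.succ #(W (Fin.last n)) := by
  set μ := #(W (Fin.last n)) with hμdef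
  have part1 : ∀ x, x ∉ W (Fin.last n) → #{z : X | lt z x} = μ := by
    intro x hx
    have hfun := Fn_fun x hx
    have hinv := Fn_inv x hx
    have hdom := Fn_dom x hx
    have hmem : ∀ y : W (Fin.last n), (hfun y y.2).choose ∈ {z : X | lt z x} :=
      fun y => (hdom y _ (hfun y y.2).choose_spec.1).2
    refine (mk_congr (Equiv.ofBijective
      (fun y : W (Fin.last n) => (⟨(hfun y y.2).choose, hmem y⟩ : {z : X | lt z x}))
      ⟨?_, ?_⟩)).symm
    · intro y1 y2 he
      have hz1 := (hfun y1 y1.2).choose_spec.1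
      have hz2 := (hfun y2 y2.2).choose_spec.1
      have heq : (hfun y1 y1.2).choose = (hfun y2 y2.2).choose := congrArg Subtype.val he
      rw [heq] at hz1
      obtain ⟨y0, -, hy0⟩ := hinv _ (hmem y2)
      exact Subtype.ext ((hy0 _ hz1).trans (hy0 _ hz2).symm)
    · rintro ⟨z, hz⟩
      obtain ⟨y, hy, -⟩ := hinv z hz
      have hyW : y ∈ W (Fin.last n) := (hdom y z hy).1
      exact ⟨⟨y, hyW⟩, Subtype.ext ((hfun y hyW).choose_spec.2 z hy).symm⟩
  refine ⟨part1, ?_⟩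
  have hle : ∀ x : X, #{z : X | lt z x} ≤ μ := by
    intro x
    by_cases hx : x ∈ W (Fin.last n)
    · exact mk_le_mk_of_subset fun z hz => lastInitial x hx z hz
    · exact (part1 x hx).le
  rcases le_or_gt ℵ₀ μ with hμ | hμ
  · exact card_le_succ_of_small_segments lt lin hμ hle
  · -- finite case: at most one element outside W
    have hWfin : (W (Fin.last n)).Finite := by
      rwa [← Cardinal.lt_aleph0_iff_set_finite]
    have hsub : ∀ x, x ∉ W (Fin.last n) → W (Fin.last n) ⊆ {z : X | lt z x} := by
      intro x hx w hw
      rcases lin.total w x with h1 | h1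
      · exact h1
      · exact absurd (lastInitial w hw x h1) hx
    have heqset : ∀ x, x ∉ W (Fin.last n) → W (Fin.last n) = {z : X | lt z x} := by
      intro x hx
      have hfin : ({z : X | lt z x}).Finite := by
        rw [← Cardinal.lt_aleph0_iff_set_finite, part1 x hx]; exact hμ
      refine Set.eq_of_subset_of_ncard_le (hsub x hx) ?_ hfin
      rw [← Nat.card_coe_set_eq, ← Nat.card_coe_set_eq]
      unfold Nat.card
      rw [part1 x hx]
    have hsingle : ((W (Fin.last n))ᶜ : Set X).Subsingleton := by
      intro a ha b hb
      by_contra hne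
      rcases lin.total a b with h1 | h1
      · exact ha ((heqset b hb) ▸ h1)
      · exact hb ((heqset a ha) ▸ h1)
    calc #X = μ + #((W (Fin.last n))ᶜ : Set X) := (mk_sum_compl _).symm
      _ ≤ μ + 1 := add_le_add_right (mk_le_one_iff_set_subsingleton.mpr hsingle) μ
      _ ≤ Order.succ μ := add_one_le_succ μ

theorem stmt8 (L : FirstOrder.Language.{0,0}) (U : L.Relations 1) (n : ℕ)
    (X : Type) [L.Structure X] (lt : X → X → Prop) (W : Fin (n + 1) → Set X)
    (Fneg : X → X → Prop) (Fi : Fin (n + 1) → X → X → X → Prop)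
    (ax : PlusAxioms L U n X lt W Fneg Fi) :
    (∀ x, x ∉ W (Fin.last n) → #{z : X | lt z x} = #(W (Fin.last n))) ∧
      #X ≤ Order.succ #(W (Fin.last n)) := by
  exact stmt8' L U n X lt W Fneg Fi trivial ax.linear ax.lastInitial ax.Fn_dom
    ax.Fn_fun ax.Fn_inv
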